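/- Under the discrete AdaBoost recursion with optimal step sizes, if W⁻ₙ = 1/2 - βₙ with βₙ ∈ (0, 1/2) for all rounds n = 0, ..., N, then the training error satisfies ∑ᵢ w₀(i)·𝟙[yᵢ·H_N(i) ≤ 0] ≤ e^{-2·∑_{p=0}^{N} β_p²}. Moreover, if minᵢ w₀(i) > e^{-2·∑_{p=0}^{N} β_p²}, then every training point is correctly classified: yᵢ·H_N(i) > 0 for all i. -/

import Mathlib

theorem stmt5 (m N : ℕ) (y : Fin m → ℝ) (hy : ∀ i, y i = 1 ∨ y i = -1)
    (h : ℕ → Fin m → ℝ) (hh : ∀ n i, h n i = 1 ∨ h n i = -1)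
    (w : ℕ → Fin m → ℝ) (hw0 : ∀ i, 0 < w 0 i) (hw0sum : ∑ i, w 0 i = 1)
    (Wm Wp : ℕ → ℝ)
    (hWm : ∀ n, Wm n = ∑ i ∈ Finset.univ.filter (fun i => y i * h n i = -1), w n i)
    (hWp : ∀ n, Wp n = ∑ i ∈ Finset.univ.filter (fun i => y i * h n i = 1), w n i)
    (β : ℕ → ℝ)
    (hβ : ∀ n ≤ N, Wm n = 1 / 2 - β n)
    (hβpos : ∀ n ≤ N, β n ∈ Set.Ioo (0 : ℝ) (1 / 2))
    (t : ℕ → ℝ) (ht : ∀ n, t n = (1 / 2) * Real.log (Wp n / Wm n))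
    (Z : ℕ → ℝ) (hZ : ∀ n, Z n = ∑ i, w n i * Real.exp (-(t n) * (y i * h n i)))
    (hwrec : ∀ n i, w (n + 1) i = w n i * Real.exp (-(t n) * (y i * h n i)) / Z n)
    (H : ℕ → Fin m → ℝ)
    (hH : ∀ n i, H n i = ∑ p ∈ Finset.range (n + 1), t p * h p i) :
    (∑ i, w 0 i * (if y i * H N i ≤ 0 then (1 : ℝ) else 0) ≤
        Real.exp (-2 * ∑ p ∈ Finset.range (N + 1), β p ^ 2)) ∧
    ((∀ i, Real.exp (-2 * ∑ p ∈ Finset.range (N + 1), β p ^ 2) < w 0 i) →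
        ∀ i, 0 < y i * H N i) := by
  -- m ≠ 0
  have hmne : Nonempty (Fin m) := by
    rcases Nat.eq_zero_or_pos m with hm | hm
    · subst hm; simp at hw0sum
    · exact ⟨⟨0, hm⟩⟩
  have hyh : ∀ n i, y i * h n i = 1 ∨ y i * h n i = -1 := by
    intro n i
    rcases hy i with h1 | h1 <;> rcases hh n i with h2 | h2 <;> simp [h1, h2]
  -- positivity of weights
  have hwpos : ∀ n i, 0 < w n i := by
    intro n
    induction n with
    | zero => exact hw0
    | succ n ih =>
      have hZp : 0 < Z n := by
        rw [hZ]
        exact Finset.sum_pos (fun i _ => mul_pos (ih i) (Real.exp_pos _))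
          Finset.univ_nonempty
      intro i
      rw [hwrec]
      exact div_pos (mul_pos (ih i) (Real.exp_pos _)) hZp
  have hZpos : ∀ n, 0 < Z n := by
    intro n
    rw [hZ]
    exact Finset.sum_pos (fun i _ => mul_pos (hwpos n i) (Real.exp_pos _))
      Finset.univ_nonempty
  -- weights sum to 1
  have hsum : ∀ n, ∑ i, w n i = 1 := by
    intro n
    induction n with
    | zero => exact hw0sum
    | succ n ih =>
      calc ∑ i, w (n + 1) i
          = (∑ i, w n i * Real.exp (-(t n) * (y i * h n i))) / Z n := by
            simp_rw [hwrec]; rw [Finset.sum_div]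
        _ = Z n / Z n := by rw [hZ]
        _ = 1 := div_self (hZpos n).ne'
  -- Wm + Wp = 1
  have hfilter : ∀ n, Finset.univ.filter (fun i => ¬ y i * h n i = -1) =
      Finset.univ.filter (fun i => y i * h n i = 1) := by
    intro n
    apply Finset.filter_congr
    intro i _
    rcases hyh n i with h1 | h1 <;> norm_num [h1]
  have hsplit : ∀ n, Wm n + Wp n = ∑ i, w n i := by
    intro n
    rw [hWm, hWp, ← hfilter n]
    exact Finset.sum_filter_add_sum_filter_not _ _ _
  have hWmval : ∀ n ≤ N, Wm n = 1 / 2 - β n := hβ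
  have hWpval : ∀ n ≤ N, Wp n = 1 / 2 + β n := by
    intro n hn
    have := hsplit n
    rw [hsum n, hβ n hn] at this
    linarith
  have hWmpos : ∀ n ≤ N, 0 < Wm n := by
    intro n hn
    rw [hβ n hn]
    have := (hβpos n hn).2
    linarith
  have hWppos : ∀ n ≤ N, 0 < Wp n := by
    intro n hn
    rw [hWpval n hn]
    have := (hβpos n hn).1
    linarith
  -- exp of t
  have hexp_t : ∀ n ≤ N, Real.exp (t n) = Real.sqrt (Wp n / Wm n) := by
    intro n hn
    rw [ht, Real.sqrt_eq_rpow,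
      Real.rpow_def_of_pos (div_pos (hWppos n hn) (hWmpos n hn))]
    ring_nf
  have hexp_nt : ∀ n ≤ N, Real.exp (-(t n)) = Real.sqrt (Wm n / Wp n) := by
    intro n hn
    have hlog : Real.log (Wm n / Wp n) = -Real.log (Wp n / Wm n) := by
      rw [← Real.log_inv, inv_div]
    rw [Real.sqrt_eq_rpow,
      Real.rpow_def_of_pos (div_pos (hWmpos n hn) (hWppos n hn)), hlog, ht]
    ring_nf
  -- Z value
  have hsqrt_mul : ∀ (a b : ℝ), 0 < a → 0 < b →
      a * Real.sqrt (b / a) = Real.sqrt (a * b) := by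
    intro a b ha hb
    rw [show a * b = a ^ 2 * (b / a) by field_simp,
      Real.sqrt_mul (sq_nonneg a), Real.sqrt_sq ha.le]
  have hZval : ∀ n ≤ N, Z n = 2 * Real.sqrt (1 / 4 - β n ^ 2) := by
    intro n hn
    have hZsplit : Z n = Wm n * Real.exp (t n) + Wp n * Real.exp (-(t n)) := by
      rw [hZ, ← Finset.sum_filter_add_sum_filter_not Finset.univ
        (fun i => y i * h n i = -1), hfilter n]
      congr 1
      · rw [hWm, Finset.sum_mul]
        apply Finset.sum_congr rfl
        intro i hi
        rw [Finset.mem_filter] at hi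
        rw [hi.2]
        ring_nf
      · rw [hWp, Finset.sum_mul]
        apply Finset.sum_congr rfl
        intro i hi
        rw [Finset.mem_filter] at hi
        rw [hi.2]
        ring_nf
    rw [hZsplit, hexp_t n hn, hexp_nt n hn,
      hsqrt_mul _ _ (hWmpos n hn) (hWppos n hn),
      hsqrt_mul _ _ (hWppos n hn) (hWmpos n hn)]
    rw [show Wp n * Wm n = Wm n * Wp n by ring]
    rw [show Wm n * Wp n = 1 / 4 - β n ^ 2 by
      rw [hβ n hn, hWpval n hn]; ring]
    ring
  -- Z bound
  have hZle : ∀ n ≤ N, Z n ≤ Real.exp (-2 * β n ^ 2) := by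
    intro n hn
    rw [hZval n hn]
    have h1 : 2 * Real.sqrt (1 / 4 - β n ^ 2) = Real.sqrt (1 - 4 * β n ^ 2) := by
      rw [show (1 : ℝ) - 4 * β n ^ 2 = 2 ^ 2 * (1 / 4 - β n ^ 2) by ring,
        Real.sqrt_mul (sq_nonneg 2), Real.sqrt_sq (by norm_num : (0:ℝ) ≤ 2)]
    rw [h1]
    have h2 : (1 : ℝ) - 4 * β n ^ 2 ≤ Real.exp (-(4 * β n ^ 2)) := by
      have := Real.add_one_le_exp (-(4 * β n ^ 2))
      linarith
    calc Real.sqrt (1 - 4 * β n ^ 2) ≤ Real.sqrt (Real.exp (-(4 * β n ^ 2))) :=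
          Real.sqrt_le_sqrt h2
      _ = Real.exp (-2 * β n ^ 2) := by
          rw [show Real.exp (-(4 * β n ^ 2)) = Real.exp (-2 * β n ^ 2) ^ 2 by
            rw [← Real.exp_nat_mul]; ring_nf,
            Real.sqrt_sq (Real.exp_pos _).le]
  -- telescoping
  have htel : ∀ n i, w (n + 1) i * ∏ p ∈ Finset.range (n + 1), Z p =
      w 0 i * Real.exp (-(y i * H n i)) := by
    intro n
    induction n with
    | zero =>
      intro i
      rw [Finset.prod_range_one, hwrec, hH, Finset.sum_range_one,
        div_mul_cancel₀ _ (hZpos 0).ne']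
      congr 1
      ring_nf
    | succ n ih =>
      intro i
      have hexp : Real.exp (-(y i * H (n + 1) i)) =
          Real.exp (-(y i * H n i)) * Real.exp (-(t (n + 1)) * (y i * h (n + 1) i)) := by
        rw [← Real.exp_add]
        congr 1
        rw [hH (n + 1) i, hH n i, Finset.sum_range_succ]
        ring
      have hZne : Z (n + 1) ≠ 0 := (hZpos (n + 1)).ne'
      rw [Finset.prod_range_succ, hwrec (n + 1) i, hexp, ← mul_assoc (w 0 i),
        ← ih i]
      field_simp
  -- key identity
  have key : ∑ i, w 0 i * Real.exp (-(y i * H N i)) =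
      ∏ p ∈ Finset.range (N + 1), Z p := by
    calc ∑ i, w 0 i * Real.exp (-(y i * H N i))
        = ∑ i, w (N + 1) i * ∏ p ∈ Finset.range (N + 1), Z p :=
          Finset.sum_congr rfl (fun i _ => (htel N i).symm)
      _ = (∑ i, w (N + 1) i) * ∏ p ∈ Finset.range (N + 1), Z p :=
          (Finset.sum_mul _ _ _).symm
      _ = ∏ p ∈ Finset.range (N + 1), Z p := by rw [hsum (N + 1), one_mul]
  -- main bound
  have main : ∑ i, w 0 i * (if y i * H N i ≤ 0 then (1 : ℝ) else 0) ≤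
      Real.exp (-2 * ∑ p ∈ Finset.range (N + 1), β p ^ 2) := by
    calc ∑ i, w 0 i * (if y i * H N i ≤ 0 then (1 : ℝ) else 0)
        ≤ ∑ i, w 0 i * Real.exp (-(y i * H N i)) := by
          apply Finset.sum_le_sum
          intro i _
          apply mul_le_mul_of_nonneg_left _ (hw0 i).le
          by_cases hc : y i * H N i ≤ 0
          · rw [if_pos hc]
            exact Real.one_le_exp (by linarith)
          · rw [if_neg hc]
            exact (Real.exp_pos _).le
      _ = ∏ p ∈ Finset.range (N + 1), Z p := key
      _ ≤ ∏ p ∈ Finset.range (N + 1), Real.exp (-2 * β p ^ 2) := by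
          apply Finset.prod_le_prod
          · intro p _; exact (hZpos p).le
          · intro p hp
            exact hZle p (Nat.lt_succ_iff.mp (Finset.mem_range.mp hp))
      _ = Real.exp (-2 * ∑ p ∈ Finset.range (N + 1), β p ^ 2) := by
          rw [← Real.exp_sum, Finset.mul_sum]
  refine ⟨main, ?_⟩
  intro hlt i
  by_contra hle
  push_neg at hle
  have hone : w 0 i ≤ ∑ j, w 0 j * (if y j * H N j ≤ 0 then (1 : ℝ) else 0) := by
    have := Finset.single_le_sum
      (f := fun j => w 0 j * (if y j * H N j ≤ 0 then (1 : ℝ) else 0))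
      (fun j _ => mul_nonneg (hw0 j).le (by split <;> norm_num)) (Finset.mem_univ i)
    simpa [if_pos hle] using this
  have := hlt i
  linarith
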